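/- The quotient ring ℤ[x]/((x − 1)(x² + 2x − 1)) is isomorphic, as a ring, to the subring {(a, b + c√2) ∈ ℤ × ℤ[√2] : a, b, c ∈ ℤ, a ≡ b (mod 2)} of ℤ × ℤ[√2], via an isomorphism sending the class of x to (1, −1 + √2). -/

import Mathlib

open Polynomial

private lemma modeq_iff (a b : ℤ) : a ≡ b [ZMOD 2] ↔ ((a : ZMod 2) = b) :=
  (ZMod.intCast_eq_intCast_iff a b 2).symm

/-- The subring `{(a, b + c√2) ∈ ℤ × ℤ[√2] : a ≡ b (mod 2)}` of `ℤ × ℤ[√2]`. -/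
def W2 : Subring (ℤ × Zsqrtd 2) where
  carrier := {p | p.1 ≡ p.2.re [ZMOD 2]}
  zero_mem' := by decide
  one_mem' := by decide
  add_mem' := by
    intro a b ha hb
    exact ha.add hb
  neg_mem' := by
    intro a ha
    exact ha.neg
  mul_mem' := by
    intro a b ha hb
    simp only [Set.mem_setOf_eq, Prod.fst_mul, Prod.snd_mul, Zsqrtd.re_mul,
      modeq_iff] at ha hb ⊢
    push_cast at ha hb ⊢
    rw [← ha, ← hb, show ((2 : ZMod 2)) = 0 from rfl]
    ring

/-- The ideal `((x − 1)(x² + 2x − 1))` of `ℤ[x]`. -/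
noncomputable def I39 : Ideal (Polynomial ℤ) :=
  Ideal.span {(X - 1) * (X ^ 2 + 2 * X - 1)}

noncomputable def phi39 : Polynomial ℤ →+* ℤ × Zsqrtd 2 :=
  (Polynomial.evalRingHom 1).prod (Polynomial.aeval (⟨-1, 1⟩ : Zsqrtd 2)).toRingHom

lemma hmonic2 : ((X : Polynomial ℤ) ^ 2 + 2 * X - 1).Monic := by
  monicity!

lemma alpha_sq : ((⟨-1, 1⟩ : Zsqrtd 2)) ^ 2 = (⟨3, -2⟩ : Zsqrtd 2) := by
  rw [pow_two, Zsqrtd.ext_iff]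
  simp [Zsqrtd.re_mul, Zsqrtd.im_mul]

lemma phi39_apply (u v w : ℤ) :
    phi39 (C u + C v * X + C w * X ^ 2) =
      (u + v + w, (⟨u - v + 3 * w, v - 2 * w⟩ : Zsqrtd 2)) := by
  have h1 : Polynomial.eval 1 (C u + C v * X + C w * X ^ 2) = u + v + w := by
    simp
  have h2 : Polynomial.aeval (⟨-1, 1⟩ : Zsqrtd 2) (C u + C v * X + C w * X ^ 2)
      = (⟨u - v + 3 * w, v - 2 * w⟩ : Zsqrtd 2) := by
    simp only [map_add, map_mul, map_pow, aeval_X, aeval_C, algebraMap_int_eq, eq_intCast,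
      alpha_sq]
    rw [Zsqrtd.ext_iff]
    simp [Zsqrtd.re_mul, Zsqrtd.im_mul]
    constructor <;> ring
  exact Prod.ext h1 h2

lemma hodd39 (n : ℕ) : (((⟨-1, 1⟩ : Zsqrtd 2)) ^ n).re ≡ 1 [ZMOD 2] := by
  induction n with
  | zero => decide
  | succ n ih =>
    rw [pow_succ]
    simp only [Zsqrtd.re_mul] at *
    simp only [Int.ModEq] at *
    omega

lemma phi39_mem (p : Polynomial ℤ) : phi39 p ∈ W2 := by
  induction p using Polynomial.induction_on' with
  | add p q hp hq => rw [map_add]; exact add_mem hp hq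
  | monomial n a =>
    show (phi39 _).1 ≡ (phi39 _).2.re [ZMOD 2]
    simp only [phi39, RingHom.prod_apply, coe_evalRingHom, eval_monomial, AlgHom.toRingHom_eq_coe,
      RingHom.coe_coe, aeval_monomial, algebraMap_int_eq, eq_intCast, one_pow, mul_one,
      Zsqrtd.re_mul, Zsqrtd.re_intCast, Zsqrtd.im_intCast, zero_mul, add_zero]
    simpa using ((hodd39 n).mul_left a).symm

lemma aeval_g2 : Polynomial.aeval (⟨-1, 1⟩ : Zsqrtd 2) ((X : Polynomial ℤ) ^ 2 + 2 * X - 1) = 0 := by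
  have hg2' : (X : Polynomial ℤ) ^ 2 + 2 * X - 1 = C (-1) + C 2 * X + C 1 * X ^ 2 := by
    simp only [map_neg, map_one, map_ofNat]
    ring
  rw [hg2']
  have h := congrArg Prod.snd (phi39_apply (-1) 2 1)
  simpa [phi39, Zsqrtd.ext_iff] using h

lemma ker39 (p : Polynomial ℤ) (hp : phi39 p = 0) : p ∈ I39 := by
  have h1 : Polynomial.eval 1 p = 0 := congrArg Prod.fst hp
  have h2 : Polynomial.aeval (⟨-1, 1⟩ : Zsqrtd 2) p = 0 := congrArg Prod.snd hp
  set g2 : Polynomial ℤ := X ^ 2 + 2 * X - 1 with hg2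
  have hdiv : p %ₘ g2 + g2 * (p /ₘ g2) = p := modByMonic_add_div p g2
  have hdeg : (p %ₘ g2).degree ≤ 1 := by
    have := degree_modByMonic_lt p hmonic2
    have hg2d : g2.degree = 2 := by rw [hg2]; compute_degree!
    rw [hg2d] at this
    exact Order.le_of_lt_succ (by exact_mod_cast this)
  have hr := eq_X_add_C_of_degree_le_one hdeg
  have hg2root : Polynomial.aeval (⟨-1, 1⟩ : Zsqrtd 2) g2 = 0 := aeval_g2
  have haer : Polynomial.aeval (⟨-1, 1⟩ : Zsqrtd 2) (p %ₘ g2) = 0 := by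
    have := congrArg (Polynomial.aeval (⟨-1, 1⟩ : Zsqrtd 2)) hdiv
    rw [map_add, map_mul, hg2root, zero_mul, add_zero, h2] at this
    exact this
  rw [hr] at haer
  simp only [map_add, map_mul, aeval_X, aeval_C, algebraMap_int_eq, eq_intCast] at haer
  rw [Zsqrtd.ext_iff] at haer
  simp [Zsqrtd.re_mul, Zsqrtd.im_mul] at haer
  have e1 : (p %ₘ g2).coeff 1 = 0 := by omega
  have e0 : (p %ₘ g2).coeff 0 = 0 := by omega
  have hr0 : p %ₘ g2 = 0 := by rw [hr, e0, e1]; simp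
  rw [hr0, zero_add] at hdiv
  have hq1 : Polynomial.eval 1 (p /ₘ g2) = 0 := by
    have := congrArg (Polynomial.eval 1) hdiv
    rw [h1, eval_mul] at this
    have h2' : (2 : ℤ) * Polynomial.eval 1 (p /ₘ g2) = 0 := by
      simpa [hg2] using this
    omega
  have hdvd : (X - 1 : Polynomial ℤ) ∣ (p /ₘ g2) := by
    have := (dvd_iff_isRoot (p := p /ₘ g2) (a := 1)).mpr hq1
    simpa using this
  obtain ⟨q', hq'⟩ := hdvd
  rw [I39, Ideal.mem_span_singleton]
  exact ⟨q', by rw [← hdiv, hq']; ring⟩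

/-- `ℤ[x]/((x − 1)(x² + 2x − 1))` is isomorphic as a ring to the subring
`{(a, b + c√2) : a ≡ b (mod 2)}` of `ℤ × ℤ[√2]`, via an isomorphism sending the class of
`x` to `(1, −1 + √2)`. -/
theorem stmt15 :
    ∃ e : (Polynomial ℤ ⧸ I39) ≃+* W2,
      ((e (Ideal.Quotient.mk I39 X) : ℤ × Zsqrtd 2)) = ((1 : ℤ), (⟨-1, 1⟩ : Zsqrtd 2)) := by
  have hle : I39 ≤ RingHom.ker phi39 := by
    rw [I39, Ideal.span_le]
    intro x hx
    simp only [Set.mem_singleton_iff] at hx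
    subst hx
    simp only [SetLike.mem_coe, RingHom.mem_ker, phi39, RingHom.prod_apply, Prod.mk_eq_zero,
      AlgHom.toRingHom_eq_coe, RingHom.coe_coe, coe_evalRingHom]
    constructor
    · simp
    · rw [map_mul, aeval_g2, mul_zero]
  let f : (Polynomial ℤ ⧸ I39) →+* ℤ × Zsqrtd 2 :=
    Ideal.Quotient.lift I39 phi39 (fun a ha => hle ha)
  have hmem : ∀ x, f x ∈ W2 := by
    intro x
    obtain ⟨p, rfl⟩ := Ideal.Quotient.mk_surjective x
    exact phi39_mem p
  let f' : (Polynomial ℤ ⧸ I39) →+* W2 := f.codRestrict W2.toSubsemiring hmem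
  have hinj : Function.Injective f' := by
    rw [injective_iff_map_eq_zero]
    intro x hx
    obtain ⟨p, rfl⟩ := Ideal.Quotient.mk_surjective x
    have : f (Ideal.Quotient.mk I39 p) = 0 := congrArg Subtype.val hx
    simp only [f, Ideal.Quotient.lift_mk] at this
    exact Ideal.Quotient.eq_zero_iff_mem.mpr (ker39 p this)
  have hsurj : Function.Surjective f' := by
    rintro ⟨⟨a, z⟩, hz⟩
    have hz' : a ≡ z.re [ZMOD 2] := hz
    obtain ⟨m, hm⟩ := hz'.dvd
    refine ⟨Ideal.Quotient.mk I39
      (C (a - 3 * (-m) + 2 * z.im) + C (2 * (-m) - z.im) * X + C ((-m) - z.im) * X ^ 2), ?_⟩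
    apply Subtype.ext
    show phi39 _ = (a, z)
    rw [phi39_apply]
    refine Prod.ext ?_ ?_
    · show _ = a; omega
    · show (⟨_, _⟩ : Zsqrtd 2) = z
      rw [Zsqrtd.ext_iff]
      constructor <;> simp <;> omega
  refine ⟨RingEquiv.ofBijective f' ⟨hinj, hsurj⟩, ?_⟩
  show (f (Ideal.Quotient.mk I39 X) : ℤ × Zsqrtd 2) = _
  rw [show f (Ideal.Quotient.mk I39 X) = phi39 X from Ideal.Quotient.lift_mk _ _ _]
  have : (X : Polynomial ℤ) = C 0 + C 1 * X + C 0 * X ^ 2 := by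
    rw [map_zero, map_one]; ring
  rw [this, phi39_apply]
  norm_num
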